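/- Let R be a commutative ring, d, e ∈ ℕ, and let f : R^d → R^{d+e} and g : R^{d+e} → R^e be R-linear maps such that f is a split injection, g is surjective, and g ∘ f = 0. Then 0 → R^d → R^{d+e} → R^e → 0 is a short exact sequence, i.e. the image of f equals the kernel of g. -/
import Mathlib


/-- If `f : R^d → R^{d+e}` is a split injection, `g : R^{d+e} → R^e` is surjective and
`g ∘ f = 0`, then `0 → R^d → R^{d+e} → R^e → 0` is a short exact sequence, i.e.
the image of `f` equals the kernel of `g`. -/
theorem range_eq_ker_of_split (R : Type) [CommRing R] (d e : ℕ)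
    (f : (Fin d → R) →ₗ[R] (Fin (d + e) → R)) (g : (Fin (d + e) → R) →ₗ[R] (Fin e → R))
    (hsplit : ∃ ρ : (Fin (d + e) → R) →ₗ[R] (Fin d → R), ρ.comp f = LinearMap.id)
    (hg : Function.Surjective g) (hgf : g.comp f = 0) :
    LinearMap.range f = LinearMap.ker g := by
  obtain ⟨ρ, hρ⟩ := hsplit
  -- section of g
  obtain ⟨s, hs⟩ := Module.projective_lifting_property g (LinearMap.id) hg
  -- the map θ : R^{d+e} → R^d × R^e
  set θ : (Fin (d + e) → R) →ₗ[R] (Fin d → R) × (Fin e → R) := ρ.prod g with hθ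
  have hρf : ∀ a, ρ (f a) = a := fun a => congrFun (congrArg DFunLike.coe hρ) a
  have hgs : ∀ b, g (s b) = b := fun b => congrFun (congrArg DFunLike.coe hs) b
  have hgf' : ∀ a, g (f a) = 0 := fun a => congrFun (congrArg DFunLike.coe hgf) a
  have hθsurj : Function.Surjective θ := by
    rintro ⟨a, b⟩
    refine ⟨f a + s b - f (ρ (s b)), ?_⟩
    simp [θ, map_add, map_sub, hρf, hgs, hgf', Prod.ext_iff]
  -- identify R^d × R^e with R^{d+e}
  let E : ((Fin d → R) × (Fin e → R)) ≃ₗ[R] (Fin (d + e) → R) :=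
    ((LinearEquiv.sumArrowLequivProdArrow (Fin d) (Fin e) R R).symm.trans
      (LinearEquiv.funCongrLeft R R finSumFinEquiv.symm))
  have hθinj : Function.Injective θ := by
    have : Function.Surjective (E.toLinearMap.comp θ) := E.surjective.comp hθsurj
    have hinj := OrzechProperty.injective_of_surjective_endomorphism _ this
    intro x y hxy
    exact hinj (by simp [LinearMap.comp_apply, hxy])
  apply le_antisymm
  · rintro x ⟨a, rfl⟩
    exact hgf' a
  · intro x hx
    have hx' : g x = 0 := hx
    refine ⟨ρ x, ?_⟩
    have : θ (f (ρ x)) = θ x := by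
      simp [θ, Prod.ext_iff, hρf, hgf', hx']
    exact hθinj this
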